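/- Concentration to a Dirac delta: for every bounded continuous function f : ℂ → ℝ, ∫_{ℝ²} |Ũ(x + iy, t)|² f(x + iy) dx dy → π·f(0) as t → 0 (t ≠ 0), where Ũ(z,t) = (1/t)·exp(−i(z² + conj(z)²)/(8t))·1/(1 + |z|²/t²) is the Ozawa solution. That is, |Ũ(·,t)|² converges to π δ₀ in the sense of distributions as t → 0. -/

import Mathlib

open Complex Filter Topology MeasureTheory

open Set Module

/-- The Ozawa solution of the Davey–Stewartson II equation:
`Ũ(z,t) = (1/t)·exp(−i(z² + conj(z)²)/(8t))·1/(1 + |z|²/t²)`. -/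
noncomputable def ozawaU (z : ℂ) (t : ℝ) : ℂ :=
  (1 / (t : ℂ)) *
    Complex.exp (-Complex.I * (z ^ 2 + ((starRingEnd ℂ) z) ^ 2) / (8 * (t : ℂ))) *
    (1 / (1 + (‖z‖ : ℂ) ^ 2 / (t : ℂ) ^ 2))

noncomputable def gfun (p : ℝ × ℝ) : ℝ := ((1 + (p.1 ^ 2 + p.2 ^ 2))⁻¹) ^ 2

lemma gfun_nonneg (p : ℝ × ℝ) : 0 ≤ gfun p := sq_nonneg _

lemma gfun_cont : Continuous gfun := by
  apply Continuous.pow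
  apply Continuous.inv₀ (by fun_prop)
  intro p; positivity

lemma gfun_integrable : Integrable gfun := by
  have h := integrable_rpow_neg_one_add_norm_sq (E := ℝ × ℝ) (μ := volume) (r := 4) (by norm_num)
  refine h.mono' gfun_cont.aestronglyMeasurable (Eventually.of_forall fun p => ?_)
  have h1 : (0:ℝ) < 1 + ‖p‖ ^ 2 := by positivity
  rw [Real.norm_eq_abs, _root_.abs_of_nonneg (gfun_nonneg p)]
  have heq : ((1:ℝ) + ‖p‖ ^ 2) ^ (-(4:ℝ) / 2) = ((1 + ‖p‖ ^ 2) ^ 2)⁻¹ := by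
    rw [show (-(4:ℝ)/2) = -((2:ℕ):ℝ) by norm_num, Real.rpow_neg h1.le, Real.rpow_natCast]
  rw [heq, gfun, inv_pow]
  have hn : ‖p‖ ^ 2 ≤ p.1 ^ 2 + p.2 ^ 2 := by
    rw [Prod.norm_def]
    rcases max_cases ‖p.1‖ ‖p.2‖ with ⟨h, _⟩ | ⟨h, _⟩ <;>
      rw [h, Real.norm_eq_abs, _root_.sq_abs] <;> nlinarith [sq_nonneg p.1, sq_nonneg p.2]
  have : (0:ℝ) < 1 + (p.1 ^ 2 + p.2 ^ 2) := by positivity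
  apply inv_anti₀ (by positivity)
  apply pow_le_pow_left₀ h1.le
  linarith

lemma radial_integral : ∫ r in Ioi (0:ℝ), r * ((1 + r ^ 2)⁻¹) ^ 2 = 1 / 2 := by
  have hderiv : ∀ x ∈ Ici (0:ℝ), HasDerivAt (fun r : ℝ => -(2 * (1 + r ^ 2))⁻¹)
      (x * ((1 + x ^ 2)⁻¹) ^ 2) x := by
    intro x _
    have h1 : (0:ℝ) < 1 + x ^ 2 := by positivity
    have : HasDerivAt (fun r : ℝ => 2 * (1 + r ^ 2)) (2 * (2 * x)) x := by
      simpa using ((hasDerivAt_pow 2 x).const_add 1).const_mul 2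
    have := (this.inv (by positivity)).neg
    refine this.congr_deriv ?_
    field_simp
  have htend : Tendsto (fun r : ℝ => -(2 * (1 + r ^ 2))⁻¹) atTop (𝓝 0) := by
    rw [show (0:ℝ) = -0 by ring]
    apply Tendsto.neg
    apply Tendsto.inv_tendsto_atTop
    apply Tendsto.const_mul_atTop (show (0:ℝ) < 2 by norm_num)
    exact tendsto_atTop_add_const_left _ _ (tendsto_pow_atTop two_ne_zero)
  have := integral_Ioi_of_hasDerivAt_of_nonneg' hderiv (fun x hx => mul_nonneg (le_of_lt hx) (sq_nonneg _)) htend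
  rw [this]
  norm_num

lemma gfun_integral : ∫ p : ℝ × ℝ, gfun p = Real.pi := by
  rw [← integral_comp_polarCoord_symm gfun]
  have : ∀ p ∈ polarCoord.target, p.1 • gfun (polarCoord.symm p) = p.1 * ((1 + p.1 ^ 2)⁻¹) ^ 2 := by
    rintro ⟨r, θ⟩ _
    have : (r * Real.cos θ) ^ 2 + (r * Real.sin θ) ^ 2 = r ^ 2 := by
      have := Real.sin_sq_add_cos_sq θ; nlinarith
    simp [gfun, polarCoord, this, smul_eq_mul]
  rw [setIntegral_congr_fun (polarCoord.open_target.measurableSet) this]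
  rw [polarCoord_target]
  rw [show (fun p : ℝ × ℝ => p.1 * ((1 + p.1 ^ 2)⁻¹) ^ 2)
    = fun p : ℝ × ℝ => (p.1 * ((1 + p.1 ^ 2)⁻¹) ^ 2) * (fun _ : ℝ => (1:ℝ)) p.2 from by
      funext p; simp]
  rw [Measure.volume_eq_prod, setIntegral_prod_mul (fun r : ℝ => r * ((1 + r ^ 2)⁻¹) ^ 2) (fun _ => (1:ℝ))]
  rw [radial_integral]
  simp [Real.pi_pos.le]
  ring


lemma norm_ozawa (z : ℂ) {t : ℝ} (ht : t ≠ 0) :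
    ‖ozawaU z t‖ ^ 2 = t ^ 2 / (t ^ 2 + ‖z‖ ^ 2) ^ 2 := by
  have hr : (0:ℝ) < 1 + ‖z‖ ^ 2 / t ^ 2 := by positivity
  have h3 : (1 : ℂ) + (‖z‖ : ℂ) ^ 2 / (t : ℂ) ^ 2 = ((1 + ‖z‖ ^ 2 / t ^ 2 : ℝ) : ℂ) := by
    push_cast; ring
  have hreal : z ^ 2 + ((starRingEnd ℂ) z) ^ 2 = ((2 * (z ^ 2).re : ℝ) : ℂ) := by
    rw [← map_pow]
    rw [Complex.add_conj]

  have hexp : ‖Complex.exp (-Complex.I * (z ^ 2 + ((starRingEnd ℂ) z) ^ 2) / (8 * (t : ℂ)))‖ = 1 := by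
    rw [hreal, Complex.norm_exp]
    have : -Complex.I * ((2 * (z ^ 2).re : ℝ) : ℂ) / (8 * (t : ℂ))
        = ((2 * (z ^ 2).re / (8 * t) : ℝ) : ℂ) * (-Complex.I) := by
      push_cast
      field_simp
    rw [this]
    simp [Complex.div_im]
  rw [ozawaU, norm_mul, norm_mul, hexp, h3]
  rw [norm_div, norm_div, norm_one, Complex.norm_real, Complex.norm_real]
  rw [Real.norm_eq_abs, Real.norm_eq_abs, _root_.abs_of_pos hr]
  have key : 1 / |t| * 1 * (1 / (1 + ‖z‖ ^ 2 / t ^ 2)) = |t| / (t ^ 2 + ‖z‖ ^ 2) := by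
    rw [mul_one, div_mul_div_comm, one_mul]
    rw [div_eq_div_iff (by positivity) (by positivity)]
    rw [one_mul, ← mul_assoc, _root_.abs_mul_abs_self t]
    field_simp
  rw [key, div_pow, _root_.sq_abs]

lemma change_of_var (f : ℂ → ℝ) {t : ℝ} (ht : t ≠ 0) :
    ∫ p : ℝ × ℝ, ‖ozawaU (p.1 + p.2 * Complex.I) t‖ ^ 2 * f (p.1 + p.2 * Complex.I)
      = ∫ q : ℝ × ℝ, gfun q * f ((t : ℂ) * (q.1 + q.2 * Complex.I)) := by
  set h : ℝ × ℝ → ℝ := fun p =>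
    (t ^ 2 / (t ^ 2 + ‖((p.1 : ℂ) + p.2 * Complex.I)‖ ^ 2) ^ 2) * f (p.1 + p.2 * Complex.I)
    with hh
  have ht2 : (t:ℝ) ^ 2 ≠ 0 := pow_ne_zero _ ht
  have h1 : (fun p : ℝ × ℝ => ‖ozawaU (p.1 + p.2 * Complex.I) t‖ ^ 2 * f (p.1 + p.2 * Complex.I))
      = h := by
    funext p; rw [hh]; simp only; rw [norm_ozawa _ ht]
  rw [h1]
  have key := MeasureTheory.Measure.integral_comp_smul (μ := volume) (f := h) (R := t)
  have hfr : Module.finrank ℝ (ℝ × ℝ) = 2 := by simp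
  rw [hfr] at key
  have habs : |((t ^ 2)⁻¹ : ℝ)| = (t ^ 2)⁻¹ := _root_.abs_of_nonneg (by positivity)
  rw [habs, smul_eq_mul] at key
  have hpt : ∀ q : ℝ × ℝ,
      h (t • q) = (t ^ 2)⁻¹ * (gfun q * f ((t : ℂ) * (q.1 + q.2 * Complex.I))) := by
    intro q
    have hz : (((t • q).1 : ℝ) : ℂ) + (((t • q).2 : ℝ) : ℂ) * Complex.I
        = (t : ℂ) * ((q.1 : ℂ) + q.2 * Complex.I) := by
      simp only [Prod.smul_fst, Prod.smul_snd, smul_eq_mul]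
      push_cast; ring
    rw [hh]; simp only
    rw [hz]
    have hnorm : ‖(t : ℂ) * ((q.1 : ℂ) + q.2 * Complex.I)‖ ^ 2 = t ^ 2 * (q.1 ^ 2 + q.2 ^ 2) := by
      rw [norm_mul, mul_pow, Complex.norm_real, Real.norm_eq_abs, _root_.sq_abs,
        Complex.sq_norm, Complex.normSq_add_mul_I]
    rw [hnorm, gfun]
    have h0 : (0:ℝ) < 1 + (q.1 ^ 2 + q.2 ^ 2) := by positivity
    field_simp
  rw [show (fun x : ℝ × ℝ => h (t • x))
      = fun q : ℝ × ℝ => (t ^ 2)⁻¹ * (gfun q * f ((t : ℂ) * (q.1 + q.2 * Complex.I)))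
    from funext hpt] at key
  rw [MeasureTheory.integral_const_mul] at key
  exact (mul_left_cancel₀ (inv_ne_zero ht2) key).symm

theorem stmt_6 (f : ℂ → ℝ) (hf_cont : Continuous f)
    (hf_bdd : ∃ C : ℝ, ∀ z : ℂ, |f z| ≤ C) :
    Tendsto
      (fun t : ℝ =>
        ∫ p : ℝ × ℝ, ‖ozawaU (p.1 + p.2 * Complex.I) t‖ ^ 2 * f (p.1 + p.2 * Complex.I))
      (𝓝[≠] 0) (𝓝 (Real.pi * f 0)) := by
  obtain ⟨C, hC⟩ := hf_bdd
  have hlim : Tendsto (fun t : ℝ => ∫ q : ℝ × ℝ, gfun q * f ((t : ℂ) * (q.1 + q.2 * Complex.I)))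
      (𝓝 (0:ℝ)) (𝓝 (Real.pi * f 0)) := by
    have hmain := tendsto_integral_filter_of_dominated_convergence (μ := volume) (l := 𝓝 (0:ℝ))
      (F := fun (t : ℝ) (q : ℝ × ℝ) => gfun q * f ((t : ℂ) * (q.1 + q.2 * Complex.I)))
      (f := fun q : ℝ × ℝ => gfun q * f 0) (bound := fun q => C * gfun q)
      (Eventually.of_forall fun t =>
        (gfun_cont.mul (hf_cont.comp (by fun_prop))).aestronglyMeasurable)
      (Eventually.of_forall fun t => Eventually.of_forall fun q => by
        rw [Real.norm_eq_abs, abs_mul, _root_.abs_of_nonneg (gfun_nonneg q)]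
        calc gfun q * |f ((t : ℂ) * (q.1 + q.2 * Complex.I))| ≤ gfun q * C :=
              mul_le_mul_of_nonneg_left (hC _) (gfun_nonneg q)
          _ = C * gfun q := mul_comm _ _)
      (gfun_integrable.const_mul C)
      (Eventually.of_forall fun q => by
        have hcont : Continuous fun t : ℝ => gfun q * f ((t : ℂ) * (q.1 + q.2 * Complex.I)) := by
          fun_prop
        simpa using hcont.tendsto 0)
    rwa [MeasureTheory.integral_mul_const, gfun_integral] at hmain
  refine Tendsto.congr' ?_ (hlim.mono_left nhdsWithin_le_nhds)
  filter_upwards [self_mem_nhdsWithin] with t ht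
  exact (change_of_var f ht).symm
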